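/- Let p : ℚ^k → ℚ be a rational quasi-polynomial of total degree n ≥ 1 with period d ∈ ℚ_{>0}^k, i.e. p(r) = Σ_{|I|_1 ≤ n} p_I(r) r^I where the p_I are periodic with period d componentwise and p_I(r) is constant whenever |I|_1 = n. Suppose there is a set S ⊆ ℚ^k and constants c_U ∈ ℚ for U ∈ ℤ_{≥0}^k such that p(r + U ⊙ d) = c_U for all r ∈ S and all U ∈ ℤ_{≥0}^k, where ⊙ denotes componentwise multiplication. Then for each multi-index I with |I|_1 ≤ n, the restriction of p_I to S is a polynomial function of total degree n − |I|_1, of degree at most n − I_j in the variable r_j, and ∂p_I/∂r_j (r) = −(I_j + 1) p_{I + e_j}(r) for all I with |I|_1 < n and all r ∈ S. -/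

import Mathlib

open MvPolynomial


theorem gridZero : ∀ {k : ℕ} (Q : MvPolynomial (Fin k) ℚ),
    (∀ U : Fin k → ℕ, eval (fun j => (U j : ℚ)) Q = 0) → Q = 0 := by
  intro k
  induction k with
  | zero =>
    intro Q h
    rw [eq_C_of_isEmpty Q] at h ⊢
    rw [show (Q.coeff 0) = 0 by simpa using h (fun j => 0), map_zero]
  | succ k ih =>
    intro Q h
    have key : ∀ U : Fin k → ℕ,
        Polynomial.map (eval (fun j => (U j : ℚ))) (finSuccEquiv ℚ k Q) = 0 := by
      intro U
      apply Polynomial.eq_zero_of_infinite_isRoot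
      apply Set.Infinite.mono (s := (↑) '' (Set.univ : Set ℕ))
      · rintro x ⟨m, -, rfl⟩
        simp only [Set.mem_setOf_eq, Polynomial.IsRoot]
        rw [← eval_eq_eval_mv_eval']
        have := h (Fin.cons m U)
        rw [show (fun j => ((Fin.cons m U : Fin (k+1) → ℕ) j : ℚ)) = Fin.cons (m:ℚ) (fun j => (U j : ℚ)) from funext (Fin.cases rfl (fun i => by simp))] at this
        exact this
      · exact Set.Infinite.image (Set.injOn_of_injective Nat.cast_injective) Set.infinite_univ
    have hco : ∀ i : ℕ, (finSuccEquiv ℚ k Q).coeff i = 0 := by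
      intro i
      apply ih
      intro U
      have := key U
      have := congrArg (fun g => Polynomial.coeff g i) this
      simpa using this
    have : finSuccEquiv ℚ k Q = 0 := Polynomial.ext fun i => by rw [hco i]; rfl
    exact (map_eq_zero_iff _ (AlgEquiv.injective _)).mp this

lemma prodXpow {k : ℕ} (f : Fin k → ℕ) :
    (∏ j, (X j : MvPolynomial (Fin k) ℚ) ^ f j)
      = monomial (Finsupp.equivFunOnFinite.symm f) 1 := by
  rw [← prod_X_pow_eq_monomial]
  symm
  apply Finset.prod_subset (Finset.subset_univ _)
  intro x _ hx
  have : f x = 0 := by simpa [Finsupp.mem_support_iff] using hx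
  simp [this]

lemma coeffProdSub {k : ℕ} (r : Fin k → ℚ) (J M : Fin k → ℕ) :
    coeff (Finsupp.equivFunOnFinite.symm M) (∏ j, ((X j : MvPolynomial (Fin k) ℚ) - C (r j)) ^ J j)
      = ∏ j, (((J j).choose (M j) : ℚ) * (-(r j)) ^ (J j - M j)) := by
  have expand : ∀ j : Fin k, ((X j : MvPolynomial (Fin k) ℚ) - C (r j)) ^ J j
      = ∑ m ∈ Finset.range (J j + 1),
          (X j : MvPolynomial (Fin k) ℚ) ^ m * C ((-(r j)) ^ (J j - m) * ((J j).choose m : ℚ)) := by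
    intro j
    rw [sub_eq_add_neg, ← C_neg, add_pow]
    apply Finset.sum_congr rfl
    intro m _
    rw [← C_pow, ← C_eq_coe_nat, mul_assoc, ← C_mul]
  simp_rw [expand]
  rw [Finset.prod_univ_sum]
  have term : ∀ x : Fin k → ℕ,
      (∏ j, (X j : MvPolynomial (Fin k) ℚ) ^ x j * C ((-(r j)) ^ (J j - x j) * ((J j).choose (x j) : ℚ)))
      = monomial (Finsupp.equivFunOnFinite.symm x) (∏ j, ((-(r j)) ^ (J j - x j) * ((J j).choose (x j) : ℚ))) := by
    intro x
    rw [Finset.prod_mul_distrib, prodXpow, ← map_prod]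
    rw [mul_comm, C_mul_monomial, mul_one]
  rw [Finset.sum_congr rfl fun x _ => term x, coeff_sum]
  simp_rw [coeff_monomial]
  by_cases hM : M ∈ Fintype.piFinset (fun j => Finset.range (J j + 1))
  · rw [Finset.sum_eq_single_of_mem M hM]
    · rw [if_pos rfl]
      exact Finset.prod_congr rfl fun j _ => mul_comm _ _
    · intro x _ hx
      rw [if_neg (fun h => hx (Finsupp.equivFunOnFinite.symm.injective h))]
  · obtain ⟨j, hj⟩ : ∃ j, ¬ M j < J j + 1 := by
      simpa [Fintype.mem_piFinset] using hM
    rw [Finset.sum_eq_zero, eq_comm]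
    · apply Finset.prod_eq_zero (Finset.mem_univ j)
      rw [Nat.choose_eq_zero_of_lt (by omega), Nat.cast_zero, zero_mul]
    · intro x hx
      rw [if_neg]
      intro h
      exact hM (Finsupp.equivFunOnFinite.symm.injective h ▸ hx)

lemma coeffAevalShift {k : ℕ} (d r : Fin k → ℚ) (G : MvPolynomial (Fin k) ℚ) (M : Fin k → ℕ) :
    coeff (Finsupp.equivFunOnFinite.symm M)
        (aeval (fun j => C (d j)⁻¹ * ((X j : MvPolynomial (Fin k) ℚ) - C (r j))) G)
      = ∑ J ∈ G.support, coeff J G *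
          ∏ j, ((d j)⁻¹ ^ J j * ((J j).choose (M j) : ℚ) * (-(r j)) ^ (J j - M j)) := by
  conv_lhs => rw [G.as_sum]
  rw [map_sum, coeff_sum]
  apply Finset.sum_congr rfl
  intro J _
  rw [aeval_monomial]
  have hprod : (J.prod fun i e => (C (d i)⁻¹ * ((X i : MvPolynomial (Fin k) ℚ) - C (r i))) ^ e)
      = ∏ i, (C (d i)⁻¹ * ((X i : MvPolynomial (Fin k) ℚ) - C (r i))) ^ J i := by
    rw [Finsupp.prod]
    apply Finset.prod_subset (Finset.subset_univ _)
    intro x _ hx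
    have : J x = 0 := by simpa [Finsupp.mem_support_iff] using hx
    simp [this]
  rw [hprod]
  simp_rw [mul_pow]
  rw [Finset.prod_mul_distrib]
  simp_rw [← C_pow]
  rw [← map_prod, algebraMap_eq, coeff_C_mul, coeff_C_mul, coeffProdSub r (fun i => J i) M]
  rw [← Finset.prod_mul_distrib]
  congr 1
  apply Finset.prod_congr rfl
  intro j _
  ring

noncomputable def qq {k : ℕ} (d : Fin k → ℚ) (G : MvPolynomial (Fin k) ℚ)
    (M : Fin k → ℕ) : MvPolynomial (Fin k) ℚ :=
  ∑ J ∈ G.support, C (coeff J G *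
      ∏ j, ((d j)⁻¹ ^ J j * ((J j).choose (M j) : ℚ) * (-1 : ℚ) ^ (J j - M j))) *
    ∏ j, (X j : MvPolynomial (Fin k) ℚ) ^ (J j - M j)

lemma sumFinsuppFun {k : ℕ} (f : Fin k → ℕ) :
    (Finsupp.equivFunOnFinite.symm f).sum (fun _ e => e) = ∑ j, f j := by
  rw [Finsupp.sum]
  apply Finset.sum_subset (Finset.subset_univ _)
  intro x _ hx
  simpa [Finsupp.mem_support_iff] using hx

lemma sumFinsupp {k : ℕ} (J : Fin k →₀ ℕ) : J.sum (fun _ e => e) = ∑ j, J j := by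
  rw [show J = Finsupp.equivFunOnFinite.symm (⇑J) from (Finsupp.equivFunOnFinite_symm_coe J).symm]
  rw [sumFinsuppFun]
  simp [Finsupp.equivFunOnFinite_symm_coe]

lemma evalqq {k : ℕ} (d : Fin k → ℚ) (G : MvPolynomial (Fin k) ℚ) (M : Fin k → ℕ)
    (r : Fin k → ℚ) :
    eval r (qq d G M) = ∑ J ∈ G.support, coeff J G *
        ∏ j, ((d j)⁻¹ ^ J j * ((J j).choose (M j) : ℚ) * (-(r j)) ^ (J j - M j)) := by
  rw [qq, map_sum]
  apply Finset.sum_congr rfl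
  intro J _
  rw [eval_mul, eval_C, map_prod]
  simp_rw [eval_pow, eval_X]
  rw [mul_assoc, ← Finset.prod_mul_distrib]
  congr 1
  apply Finset.prod_congr rfl
  intro j _
  rw [neg_pow (r j)]
  ring


lemma qq_monomial {k : ℕ} (d : Fin k → ℚ) (G : MvPolynomial (Fin k) ℚ) (M : Fin k → ℕ) :
    qq d G M = ∑ J ∈ G.support,
      monomial (Finsupp.equivFunOnFinite.symm (fun j => J j - M j))
        (coeff J G * ∏ j, ((d j)⁻¹ ^ J j * ((J j).choose (M j) : ℚ) * (-1 : ℚ) ^ (J j - M j))) := by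
  rw [qq]
  apply Finset.sum_congr rfl
  intro J _
  rw [prodXpow, C_mul_monomial, mul_one]

lemma qq_totalDegree {k n : ℕ} (d : Fin k → ℚ) (G : MvPolynomial (Fin k) ℚ)
    (hG : G.totalDegree ≤ n) (M : Fin k → ℕ) :
    (qq d G M).totalDegree ≤ n - ∑ j, M j := by
  rw [qq_monomial]
  refine (totalDegree_finset_sum _ _).trans (Finset.sup_le ?_)
  intro J hJ
  have hJn : ∑ j, J j ≤ n := le_trans (le_of_eq (sumFinsupp J).symm)
    (le_trans (le_totalDegree hJ) hG)
  by_cases hall : ∀ j, M j ≤ J j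
  · refine (totalDegree_monomial_le _ _).trans ?_
    rw [show ((Finsupp.equivFunOnFinite.symm fun j => J j - M j).sum fun _ => id)
        = ∑ j, (J j - M j) from sumFinsuppFun _]
    have : ∑ j, (J j - M j) + ∑ j, M j = ∑ j, J j := by
      rw [← Finset.sum_add_distrib]
      exact Finset.sum_congr rfl fun j _ => Nat.sub_add_cancel (hall j)
    omega
  · push_neg at hall
    obtain ⟨j, hj⟩ := hall
    have hc : (coeff J G * ∏ i, ((d i)⁻¹ ^ J i * ((J i).choose (M i) : ℚ)
        * (-1 : ℚ) ^ (J i - M i))) = 0 := by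
      rw [Finset.prod_eq_zero (Finset.mem_univ j)]
      · ring
      · rw [Nat.choose_eq_zero_of_lt hj, Nat.cast_zero]; ring
    rw [hc, monomial_zero]
    simp

lemma qq_degreeOf {k n : ℕ} (d : Fin k → ℚ) (G : MvPolynomial (Fin k) ℚ)
    (hG : G.totalDegree ≤ n) (M : Fin k → ℕ) (h : Fin k) :
    degreeOf h (qq d G M) ≤ n - M h := by
  rw [qq_monomial]
  refine (degreeOf_sum_le _ _ _).trans (Finset.sup_le ?_)
  intro J hJ
  have hJn : J h ≤ n := by
    refine le_trans ?_ (le_trans (le_of_eq (sumFinsupp J).symm) (le_trans (le_totalDegree hJ) hG))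
    exact Finset.single_le_sum (f := fun j => J j) (fun _ _ => Nat.zero_le _) (Finset.mem_univ h)
  set a := coeff J G * ∏ j, ((d j)⁻¹ ^ J j * ((J j).choose (M j) : ℚ) * (-1 : ℚ) ^ (J j - M j))
  by_cases ha : a = 0
  · rw [ha, monomial_zero]
    simp
  · rw [degreeOf_monomial_eq _ _ ha]
    exact Nat.sub_le_sub_right hJn _


lemma scalar_id (a m : ℕ) (u : ℚ) :
    (u ^ a * (a.choose m : ℚ) * (-1 : ℚ) ^ (a - m)) * ((a - m : ℕ) : ℚ)
      = -((m : ℚ) + 1) * (u ^ a * (a.choose (m + 1) : ℚ) * (-1 : ℚ) ^ (a - (m + 1))) := by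
  by_cases h : a ≤ m
  · rw [Nat.sub_eq_zero_of_le h, Nat.choose_eq_zero_of_lt (Nat.lt_succ_of_le h)]
    push_cast
    ring
  · push_neg at h
    have hnat : (a.choose (m + 1) * (m + 1)) = a.choose m * (a - m) := Nat.choose_succ_right_eq a m
    have hq : ((a.choose (m + 1) : ℚ)) * ((m : ℚ) + 1) = (a.choose m : ℚ) * ((a - m : ℕ) : ℚ) := by
      exact_mod_cast congrArg (Nat.cast : ℕ → ℚ) hnat
    have hsign : ((-1 : ℚ)) ^ (a - m) = -(-1 : ℚ) ^ (a - (m + 1)) := by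
      have : a - m = (a - (m + 1)) + 1 := by omega
      rw [this, pow_succ]; ring
    rw [hsign]
    linear_combination ((u ^ a) * (-1 : ℚ) ^ (a - (m + 1))) * hq

lemma qq_pderiv {k : ℕ} (d : Fin k → ℚ) (G : MvPolynomial (Fin k) ℚ)
    (i : Fin k) (M : Fin k → ℕ) :
    pderiv i (qq d G M) = C (-((M i : ℚ) + 1)) * qq d G (Function.update M i (M i + 1)) := by
  rw [qq_monomial, qq_monomial, map_sum, Finset.mul_sum]
  apply Finset.sum_congr rfl
  intro J _
  rw [pderiv_monomial, C_mul_monomial]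
  have hidx : (Finsupp.equivFunOnFinite.symm fun j => J j - M j) - Finsupp.single i 1
      = Finsupp.equivFunOnFinite.symm (fun j => J j - (Function.update M i (M i + 1)) j) := by
    ext x
    rw [Finsupp.tsub_apply, Finsupp.single_apply]
    by_cases hx : x = i
    · subst hx
      simp [Function.update_self]
      omega
    · simp [Function.update_of_ne hx, if_neg (Ne.symm hx)]
  rw [hidx]
  congr 1
  have happ : (Finsupp.equivFunOnFinite.symm fun j => J j - M j) i = J i - M i := rfl
  rw [happ]
  rw [Finset.prod_eq_mul_prod_sdiff_singleton_of_mem (Finset.mem_univ i)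
      (fun j => ((d j)⁻¹ ^ J j * ((J j).choose (M j) : ℚ) * (-1 : ℚ) ^ (J j - M j))),
    Finset.prod_eq_mul_prod_sdiff_singleton_of_mem (Finset.mem_univ i)
      (fun j => ((d j)⁻¹ ^ J j * ((J j).choose ((Function.update M i (M i + 1)) j) : ℚ)
        * (-1 : ℚ) ^ (J j - (Function.update M i (M i + 1)) j)))]
  have hrest : ∏ x ∈ Finset.univ \ {i},
        ((d x)⁻¹ ^ J x * ((J x).choose ((Function.update M i (M i + 1)) x) : ℚ)
          * (-1 : ℚ) ^ (J x - (Function.update M i (M i + 1)) x))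
      = ∏ x ∈ Finset.univ \ {i},
        ((d x)⁻¹ ^ J x * ((J x).choose (M x) : ℚ) * (-1 : ℚ) ^ (J x - M x)) := by
    apply Finset.prod_congr rfl
    intro x hx
    have : x ≠ i := by simpa using (Finset.mem_sdiff.mp hx).2
    rw [Function.update_of_ne this]
  rw [hrest, Function.update_self]
  have := scalar_id (J i) (M i) (d i)⁻¹
  calc coeff J G * (((d i)⁻¹ ^ J i * ((J i).choose (M i) : ℚ) * (-1 : ℚ) ^ (J i - M i))
        * ∏ x ∈ Finset.univ \ {i}, ((d x)⁻¹ ^ J x * ((J x).choose (M x) : ℚ)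
          * (-1 : ℚ) ^ (J x - M x))) * ((J i - M i : ℕ) : ℚ)
      = (((d i)⁻¹ ^ J i * ((J i).choose (M i) : ℚ) * (-1 : ℚ) ^ (J i - M i)) * ((J i - M i : ℕ) : ℚ))
        * (coeff J G * ∏ x ∈ Finset.univ \ {i}, ((d x)⁻¹ ^ J x * ((J x).choose (M x) : ℚ)
          * (-1 : ℚ) ^ (J x - M x))) := by ring
    _ = _ := by rw [this]; ring

lemma periodIter {k : ℕ} (f : (Fin k → ℚ) → ℚ) (d : Fin k → ℚ)
    (hper : ∀ (i : Fin k) (r : Fin k → ℚ), f (Function.update r i (r i + d i)) = f r)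
    (U : Fin k → ℕ) (r : Fin k → ℚ) :
    f (fun j => r j + U j * d j) = f r := by
  have hstep : ∀ (m : ℕ) (i : Fin k) (s : Fin k → ℚ),
      f (Function.update s i (s i + m * d i)) = f s := by
    intro m
    induction m with
    | zero => intro i s; simp
    | succ m ih =>
      intro i s
      have key : Function.update s i (s i + (m + 1 : ℕ) * d i)
          = Function.update (Function.update s i (s i + m * d i)) i
              ((Function.update s i (s i + m * d i)) i + d i) := by
        rw [Function.update_self, Function.update_idem]
        congr 1
        push_cast
        ring
      rw [key, hper, ih]
  have claim : ∀ T : Finset (Fin k),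
      f (fun j => if j ∈ T then r j + U j * d j else r j) = f r := by
    intro T
    induction T using Finset.induction with
    | empty => simp
    | @insert i T hi ih =>
      have key : (fun j => if j ∈ insert i T then r j + U j * d j else r j)
          = Function.update (fun j => if j ∈ T then r j + U j * d j else r j) i
              ((fun j => if j ∈ T then r j + U j * d j else r j) i + (U i) * d i) := by
        funext x
        by_cases hx : x = i
        · subst hx
          simp [Function.update_self, hi]
        · rw [Function.update_of_ne hx]
          simp [Finset.mem_insert, hx]
      rw [key]
      have := hstep (U i) i (fun j => if j ∈ T then r j + U j * d j else r j)
      rw [this, ih]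
  have := claim Finset.univ
  simpa using this
set_option maxHeartbeats 1000000 in
theorem stmt4 {k n : ℕ} (hn : 1 ≤ n)
    (p : (Fin k → ℚ) → ℚ) (pc : (Fin k → ℕ) → (Fin k → ℚ) → ℚ)
    (d : Fin k → ℚ) (hd : ∀ i, 0 < d i)
    -- quasi-polynomial form `p(r) = Σ_{|I|₁ ≤ n} p_I(r) r^I`
    (hform : ∀ r : Fin k → ℚ,
      p r = ∑ I ∈ Finset.univ.filter
          (fun I : Fin k → Fin (n + 1) => (∑ j, (I j : ℕ)) ≤ n),
        pc (fun j => (I j : ℕ)) r * ∏ j, r j ^ (I j : ℕ))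
    -- each coefficient is periodic with period `d i` in the `i`-th component
    (hper : ∀ (I : Fin k → ℕ) (i : Fin k) (r : Fin k → ℚ),
      pc I (Function.update r i (r i + d i)) = pc I r)
    -- constant leading coefficients
    (hlead : ∀ I : Fin k → ℕ, (∑ j, I j) = n → ∀ r r' : Fin k → ℚ, pc I r = pc I r')
    (S : Set (Fin k → ℚ)) (c : (Fin k → ℕ) → ℚ)
    (hval : ∀ r ∈ S, ∀ U : Fin k → ℕ, p (fun j => r j + U j * d j) = c U) :
    ∃ q : (Fin k → ℕ) → MvPolynomial (Fin k) ℚ,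
      ∀ I : Fin k → ℕ, (∑ j, I j) ≤ n →
        (q I).totalDegree ≤ n - (∑ j, I j) ∧
        (∀ h : Fin k, (q I).degreeOf h ≤ n - I h) ∧
        (∀ r ∈ S, pc I r = MvPolynomial.eval r (q I)) ∧
        ((∑ j, I j) < n → ∀ j : Fin k, ∀ r ∈ S,
          MvPolynomial.eval r (MvPolynomial.pderiv j (q I)) =
            -((I j : ℚ) + 1) * pc (Function.update I j (I j + 1)) r) := by
  classical
  rcases S.eq_empty_or_nonempty with hS | ⟨r0, hr0⟩
  · subst hS
    refine ⟨fun _ => 0, fun I hI => ⟨by simp, by simp, ?_, ?_⟩⟩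
    · intro r hr; exact absurd hr (by simp)
    · intro _ _ r hr; exact absurd hr (by simp)
  · set filt := Finset.univ.filter
        (fun I : Fin k → Fin (n + 1) => (∑ j, (I j : ℕ)) ≤ n) with hfilt
    set Fp : (Fin k → ℚ) → MvPolynomial (Fin k) ℚ := fun r =>
      ∑ I ∈ filt, C (pc (fun j => (I j : ℕ)) r) *
        ∏ j, (C (d j) * X j + C (r j)) ^ (I j : ℕ) with hFp
    -- eval of Fp on the natural grid
    have hFeval : ∀ r : Fin k → ℚ, ∀ U : Fin k → ℕ,
        eval (fun j => (U j : ℚ)) (Fp r) = p (fun j => r j + U j * d j) := by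
      intro r U
      rw [hform, hFp]
      simp only [map_sum, eval_mul, eval_C, map_prod, eval_pow, eval_add, eval_X]
      apply Finset.sum_congr rfl
      intro I _
      rw [periodIter (pc (fun j => (I j : ℕ))) d (hper _) U r]
      congr 1
      apply Finset.prod_congr rfl
      intro j _
      congr 1
      ring
    set G := Fp r0 with hG
    -- Fp is constant on S
    have hFconst : ∀ r ∈ S, Fp r = G := by
      intro r hr
      have h0 : Fp r - G = 0 := by
        apply gridZero
        intro U
        rw [map_sub, hFeval r U, hFeval r0 U, hval r hr U, hval r0 hr0 U, sub_self]
      exact sub_eq_zero.mp h0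
    -- the substituted form of Fp
    have haeval : ∀ r : Fin k → ℚ,
        aeval (fun j => C (d j)⁻¹ * ((X j : MvPolynomial (Fin k) ℚ) - C (r j))) (Fp r)
          = ∑ I ∈ filt, C (pc (fun j => (I j : ℕ)) r) * ∏ j, (X j : MvPolynomial (Fin k) ℚ) ^ (I j : ℕ) := by
      intro r
      rw [hFp]
      rw [map_sum]
      apply Finset.sum_congr rfl
      intro I _
      rw [map_mul, map_prod]
      congr 1
      · rw [aeval_C, algebraMap_eq]
      · apply Finset.prod_congr rfl
        intro j _
        rw [map_pow]
        congr 1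
        simp only [map_add, map_mul, aeval_X, aeval_C, algebraMap_eq]
        rw [← mul_assoc, ← C_mul, mul_inv_cancel₀ (hd j).ne', C_1, one_mul]
        ring
    -- coefficient extraction
    have hpcsum : ∀ (r : Fin k → ℚ) (M : Fin k → ℕ), (∑ j, M j) ≤ n →
        pc M r = coeff (Finsupp.equivFunOnFinite.symm M)
          (∑ I ∈ filt, C (pc (fun j => (I j : ℕ)) r) * ∏ j, (X j : MvPolynomial (Fin k) ℚ) ^ (I j : ℕ)) := by
      intro r M hM
      have hMj : ∀ j, M j < n + 1 := by
        intro j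
        have := Finset.single_le_sum (f := M) (fun _ _ => Nat.zero_le _) (Finset.mem_univ j)
        omega
      set I0 : Fin k → Fin (n + 1) := fun j => ⟨M j, hMj j⟩ with hI0
      have hI0mem : I0 ∈ filt := by
        rw [hfilt, Finset.mem_filter]
        exact ⟨Finset.mem_univ _, by simpa using hM⟩
      rw [coeff_sum]
      have hterm : ∀ I : Fin k → Fin (n + 1),
          coeff (Finsupp.equivFunOnFinite.symm M)
            (C (pc (fun j => (I j : ℕ)) r) * ∏ j, (X j : MvPolynomial (Fin k) ℚ) ^ (I j : ℕ))
          = if (fun j => (I j : ℕ)) = M then pc (fun j => (I j : ℕ)) r else 0 := by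
        intro I
        rw [prodXpow, C_mul_monomial, mul_one, coeff_monomial]
        simp only [EmbeddingLike.apply_eq_iff_eq]
      rw [Finset.sum_congr rfl (fun I _ => hterm I)]
      rw [Finset.sum_eq_single_of_mem I0 hI0mem]
      · rw [if_pos (funext fun j => rfl)]
      · intro I _ hne
        rw [if_neg]
        intro h
        apply hne
        funext j
        exact Fin.ext (congrFun h j)
    -- total degree of G
    have hGdeg : G.totalDegree ≤ n := by
      rw [hG, hFp]
      refine (totalDegree_finset_sum _ _).trans (Finset.sup_le ?_)
      intro I hI
      refine (totalDegree_mul _ _).trans ?_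
      rw [totalDegree_C, zero_add]
      refine (totalDegree_finset_prod _ _).trans ?_
      have hfac : ∀ j : Fin k,
          ((C (d j) * X j + C (r0 j)) ^ (I j : ℕ)).totalDegree ≤ (I j : ℕ) := by
        intro j
        refine (totalDegree_pow _ _).trans ?_
        have h1 : (C (d j) * X j + C (r0 j)).totalDegree ≤ 1 := by
          refine (totalDegree_add _ _).trans ?_
          refine max_le ?_ ?_
          · refine (totalDegree_mul _ _).trans ?_
            rw [totalDegree_C, zero_add]
            exact le_of_eq (totalDegree_X j)
          · rw [totalDegree_C]; omega
        calc (I j : ℕ) * (C (d j) * X j + C (r0 j)).totalDegree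
            ≤ (I j : ℕ) * 1 := Nat.mul_le_mul_left _ h1
          _ = (I j : ℕ) := Nat.mul_one _
      refine (Finset.sum_le_sum fun j _ => hfac j).trans ?_
      rw [hfilt] at hI
      exact (Finset.mem_filter.mp hI).2
    -- the key evaluation identity
    have heval : ∀ (M : Fin k → ℕ), (∑ j, M j) ≤ n → ∀ r ∈ S,
        pc M r = eval r (qq d G M) := by
      intro M hM r hr
      rw [hpcsum r M hM, ← haeval r, hFconst r hr, coeffAevalShift, evalqq]
    refine ⟨fun M => qq d G M, fun M hM => ⟨qq_totalDegree d G hGdeg M, qq_degreeOf d G hGdeg M,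
      heval M hM, ?_⟩⟩
    intro hlt j r hr
    have hsum' : (∑ i, Function.update M j (M j + 1) i) = (∑ i, M i) + 1 := by
      rw [Finset.sum_update_of_mem (Finset.mem_univ j)]
      have h2 : (M j) + ∑ x ∈ Finset.univ \ {j}, M x = ∑ i, M i :=
        (Finset.sum_eq_add_sum_sdiff_singleton_of_mem (Finset.mem_univ j) M).symm
      omega
    rw [qq_pderiv, eval_mul, eval_C, ← heval _ (by omega) r hr]
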